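/- Let D = y ∂/∂x + (1/2) ∂²/∂y² be the generator of the Kolmogorov diffusion. The function h(x,y) defined for x>0, y≥0 by h(x,y) = (2/9)^{1/6} (y/x^{1/6}) U(1/6, 4/3, 2y³/(9x)), where U is the confluent hypergeometric function of the second kind, satisfies D h = 0 on the region {x>0, y>0}. -/

import Mathlib

/-- Let `D = y ∂/∂x + (1/2) ∂²/∂y²` be the generator of the Kolmogorov diffusion.
The function `h(x,y) = (2/9)^(1/6) (y/x^(1/6)) U(1/6, 4/3, 2y³/(9x))`, where `U` is
Tricomi's confluent hypergeometric function (a smooth solution of Kummer's equation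
`s U'' + (b - s) U' - a U = 0` with `a = 1/6`, `b = 4/3` on `(0,∞)`), satisfies
`D h = 0` on the region `{x > 0, y > 0}`. -/
theorem kolmogorov_harmonic_of_kummer (U : ℝ → ℝ)
    (hUsmooth : ∀ s ∈ Set.Ioi (0 : ℝ), ContDiffAt ℝ 2 U s)
    (hKummer : ∀ s > (0 : ℝ),
      s * deriv (deriv U) s + (4 / 3 - s) * deriv U s - (1 / 6) * U s = 0)
    (h : ℝ → ℝ → ℝ)
    (hdef : ∀ x y : ℝ, 0 < x → 0 < y →
      h x y = (2 / 9 : ℝ) ^ ((1 : ℝ) / 6) * (y / x ^ ((1 : ℝ) / 6)) * U (2 * y ^ 3 / (9 * x)))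
    (x y : ℝ) (hx : 0 < x) (hy : 0 < y) :
    y * deriv (fun x' => h x' y) x
      + (1 / 2) * deriv (fun y' => deriv (fun y'' => h x y'') y') y = 0 := by
  have hU1 : ∀ t : ℝ, 0 < t → HasDerivAt U (deriv U t) t := fun t ht =>
    ((hUsmooth t ht).differentiableAt (by norm_num)).hasDerivAt
  have hU2 : ∀ t : ℝ, 0 < t → HasDerivAt (deriv U) (deriv (deriv U) t) t := by
    intro t ht
    have h1 : ContDiffAt ℝ 1 (fun u => fderiv ℝ U u 1) t :=
      ((hUsmooth t ht).fderiv_right (by norm_num)).clm_apply contDiffAt_const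
    have heq : deriv U = fun u => fderiv ℝ U u 1 := funext fun u => fderiv_apply_one_eq_deriv.symm
    rw [heq]
    exact (h1.differentiableAt one_ne_zero).hasDerivAt
  set C : ℝ := (2 / 9 : ℝ) ^ ((1 : ℝ) / 6) with hCdef
  have hs : 0 < 2 * y ^ 3 / (9 * x) := by positivity
  have hP : 0 < x ^ ((1 : ℝ) / 6) := Real.rpow_pos_of_pos hx _
  -- x-derivative
  have harg : 2 * y ^ 3 * (9 * x)⁻¹ = 2 * y ^ 3 / (9 * x) := (div_eq_mul_inv _ _).symm
  have h9x : HasDerivAt (fun x' : ℝ => 9 * x') 9 x := by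
    simpa using (hasDerivAt_id x).const_mul (9 : ℝ)
  have hinv := h9x.inv (by positivity)
  have hsx := hinv.const_mul (2 * y ^ 3)
  have hUcomp : HasDerivAt (fun x' => U (2 * y ^ 3 * (9 * x')⁻¹))
      (deriv U (2 * y ^ 3 / (9 * x)) * (2 * y ^ 3 * (-9 / (9 * x) ^ 2))) x := by
    have := (hU1 _ (harg ▸ hs)).comp x hsx
    simp only [Pi.inv_apply, Function.comp_def] at this
    rwa [harg] at this
  have hpow : HasDerivAt (fun x' : ℝ => x' ^ ((1:ℝ)/6)) ((1:ℝ)/6 * x ^ ((1:ℝ)/6 - 1)) x :=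
    Real.hasDerivAt_rpow_const (Or.inl hx.ne')
  have hdiv : HasDerivAt (fun x' : ℝ => y / x' ^ ((1:ℝ)/6))
      ((0 * x ^ ((1:ℝ)/6) - y * ((1:ℝ)/6 * x ^ ((1:ℝ)/6 - 1))) / (x ^ ((1:ℝ)/6)) ^ 2) x :=
    (hasDerivAt_const x y).div hpow hP.ne'
  have H1 := ((hdiv.mul hUcomp).const_mul C).congr_of_eventuallyEq
      (f₁ := fun x' => h x' y) ?evx
  case evx =>
    filter_upwards [eventually_gt_nhds hx] with x' hx'
    rw [hdef x' y hx' hy, div_eq_mul_inv (2 * y ^ 3) (9 * x')]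
    simp only [Pi.mul_apply]
    ring
  -- first y-derivative at any b' > 0
  have hDeriv1 : ∀ b' : ℝ, 0 < b' → HasDerivAt (fun y'' => h x y'')
      (C / x ^ ((1:ℝ)/6) * (1 * U (2 * b' ^ 3 / (9 * x))
        + b' * (deriv U (2 * b' ^ 3 / (9 * x)) * (2 * ((3:ℕ) * b' ^ 2) / (9 * x))))) b' := by
    intro b' hb'
    have hσ : HasDerivAt (fun z : ℝ => 2 * z ^ 3 / (9 * x)) (2 * ((3:ℕ) * b' ^ 2) / (9 * x)) b' := by
      have := ((hasDerivAt_pow 3 b').const_mul 2).div_const (9 * x)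
      simpa using this
    have hsb : 0 < 2 * b' ^ 3 / (9 * x) := by positivity
    have hUσ := (hU1 _ hsb).comp b' hσ
    simp only [Function.comp_def] at hUσ
    have H := (((hasDerivAt_id b').mul hUσ).const_mul (C / x ^ ((1:ℝ)/6)))
    refine H.congr_of_eventuallyEq ?_
    filter_upwards [eventually_gt_nhds hb'] with z hz
    rw [hdef x z hx hz]
    simp only [id_eq, Pi.mul_apply]
    ring
  have hev2 : deriv (fun y'' => h x y'') =ᶠ[nhds y]
      fun b' => C / x ^ ((1:ℝ)/6) * (1 * U (2 * b' ^ 3 / (9 * x))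
        + b' * (deriv U (2 * b' ^ 3 / (9 * x)) * (2 * ((3:ℕ) * b' ^ 2) / (9 * x)))) := by
    filter_upwards [eventually_gt_nhds hy] with b' hb' using (hDeriv1 b' hb').deriv
  -- second y-derivative
  have hσy : HasDerivAt (fun z : ℝ => 2 * z ^ 3 / (9 * x)) (2 * ((3:ℕ) * y ^ 2) / (9 * x)) y := by
    have := ((hasDerivAt_pow 3 y).const_mul 2).div_const (9 * x)
    simpa using this
  have hUσy := (hU1 _ hs).comp y hσy
  have hU'σy := (hU2 _ hs).comp y hσy
  simp only [Function.comp_def] at hUσy hU'σy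
  have hq : HasDerivAt (fun z : ℝ => 2 * ((3:ℕ) * z ^ 2) / (9 * x))
      (2 * ((3:ℕ) * ((2:ℕ) * y ^ 1)) / (9 * x)) y := by
    have := (((hasDerivAt_pow 2 y).const_mul ((3:ℕ):ℝ)).const_mul 2).div_const (9 * x)
    simpa using this
  have H2full := (((hUσy.const_mul 1).add
      ((hasDerivAt_id y).mul (hU'σy.mul hq))).const_mul (C / x ^ ((1:ℝ)/6)))
  simp only [id_eq, Pi.mul_apply, Pi.add_apply] at H2full
  have H2 := H2full.congr_of_eventuallyEq hev2
  rw [show (fun y' => deriv (fun y'' => h x y'') y') = deriv (fun y'' => h x y'') from rfl]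
  rw [H1.deriv, H2.deriv, harg]
  -- algebra
  have hQ : x ^ ((1:ℝ)/6 - 1) = x ^ ((1:ℝ)/6) / x := by
    rw [Real.rpow_sub hx, Real.rpow_one]
  have hB : deriv (deriv U) (2 * y ^ 3 / (9 * x)) =
      ((1/6) * U (2 * y ^ 3 / (9 * x)) - (4/3 - 2 * y ^ 3 / (9 * x)) * deriv U (2 * y ^ 3 / (9 * x)))
        / (2 * y ^ 3 / (9 * x)) := by
    have K := hKummer _ hs
    rw [eq_div_iff hs.ne']
    linear_combination K
  rw [hQ, hB]
  have hx6 : x ^ ((1:ℝ)/6) ≠ 0 := hP.ne'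
  push_cast
  field_simp
  ring
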